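/- arXiv:1212.0226 — 3 statements merged into one kernel-verified Lean document; each statement's English description precedes it below -/
import Mathlib

section
/- Let G_x ∈ ℝ^{n×m}, G_r ∈ ℝ^{p×m} with ker(G_r) ⊆ ker(G_x), δ > 0. Let λ* be the largest generalized eigenvalue of the pencil (G_xᵀG_x, G_rᵀG_r) with unit-norm eigenvector v* (so G_r v* ≠ 0). Then a* = (δ/‖G_r v*‖₂) v* satisfies ‖G_r a*‖₂ = δ and ‖G_x a*‖₂² = λ* δ², and for every a with ‖G_r a‖₂ ≤ δ one has ‖G_x a‖₂² ≤ λ* δ². -/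
open Matrix BigOperators

lemma sum_sq_eq_zero_iff {k : ℕ} (x : Fin k → ℝ) : ∑ i, x i ^ 2 = 0 ↔ x = 0 := by
  constructor
  · intro h
    funext i
    have h1 := (Finset.sum_eq_zero_iff_of_nonneg (fun i _ => sq_nonneg (x i))).1 h i (Finset.mem_univ i)
    exact (pow_eq_zero_iff (by norm_num : (2:ℕ) ≠ 0)).1 h1
  · intro h; simp [h]

lemma sq_sum_eq {k l : ℕ} (G : Matrix (Fin k) (Fin l) ℝ) (a : Fin l → ℝ) :
    ∑ i, (G.mulVec a i) ^ 2 = a ⬝ᵥ (Gᵀ * G).mulVec a := by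
  rw [← Matrix.mulVec_mulVec, Matrix.dotProduct_mulVec, Matrix.vecMul_transpose]
  simp [dotProduct, sq]

lemma cont_sumsq {k l : ℕ} (G : Matrix (Fin k) (Fin l) ℝ) :
    Continuous fun a : Fin l → ℝ => ∑ i, (G.mulVec a i) ^ 2 := by
  apply continuous_finset_sum
  intro i _
  have : Continuous fun a : Fin l → ℝ => G.mulVec a i := by
    simp only [Matrix.mulVec, dotProduct]
    exact continuous_finset_sum _ fun j _ => continuous_const.mul (continuous_apply j)
  exact this.pow 2

lemma sumsq_smul {k l : ℕ} (G : Matrix (Fin k) (Fin l) ℝ) (c : ℝ) (a : Fin l → ℝ) :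
    ∑ i, (G.mulVec (c • a) i) ^ 2 = c ^ 2 * ∑ i, (G.mulVec a i) ^ 2 := by
  rw [Matrix.mulVec_smul, Finset.mul_sum]
  exact Finset.sum_congr rfl fun i _ => by simp [smul_eq_mul]; ring



lemma dot_symm {l : ℕ} (M : Matrix (Fin l) (Fin l) ℝ) (hM : Mᵀ = M) (v w : Fin l → ℝ) :
    v ⬝ᵥ M.mulVec w = w ⬝ᵥ M.mulVec v := by
  rw [Matrix.dotProduct_mulVec, ← hM, Matrix.vecMul_transpose, dotProduct_comm, hM]

lemma quad_max_kernel {l : ℕ} (M : Matrix (Fin l) (Fin l) ℝ) (hM : Mᵀ = M)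
    (hsym : ∀ v w : Fin l → ℝ, v ⬝ᵥ M.mulVec w = w ⬝ᵥ M.mulVec v)
    (hle : ∀ a : Fin l → ℝ, a ⬝ᵥ M.mulVec a ≤ 0) (x : Fin l → ℝ)
    (hx : x ⬝ᵥ M.mulVec x = 0) : M.mulVec x = 0 := by
  have key : ∀ u : Fin l → ℝ, u ⬝ᵥ M.mulVec x = 0 := by
    intro u
    set c := u ⬝ᵥ M.mulVec x with hc
    set q := u ⬝ᵥ M.mulVec u with hqdef
    have hq : q ≤ 0 := hle u
    have expand : ∀ t : ℝ, 2 * t * c + t ^ 2 * q ≤ 0 := by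
      intro t
      have h1 := hle (x + t • u)
      have e : (x + t • u) ⬝ᵥ M.mulVec (x + t • u)
          = x ⬝ᵥ M.mulVec x + t * (u ⬝ᵥ M.mulVec x) + t * (x ⬝ᵥ M.mulVec u)
            + t ^ 2 * (u ⬝ᵥ M.mulVec u) := by
        simp [Matrix.mulVec_add, Matrix.mulVec_smul, dotProduct_add,
          add_dotProduct, dotProduct_smul, smul_dotProduct,
          smul_eq_mul]
        ring
      rw [e, hx, hsym x u] at h1
      linarith
    have h1 : (0:ℝ) < 1 - q := by linarith
    set t := c / (1 - q) with htdef
    have ht : t * (1 - q) = c := div_mul_cancel₀ _ (ne_of_gt h1)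
    have h5 := expand t
    have h5' : 2 * t * (t * (1 - q)) + t ^ 2 * q ≤ 0 := by rw [ht]; exact h5
    have h6 : t ^ 2 ≤ 0 := by nlinarith [h5', mul_nonneg (sq_nonneg t) (neg_nonneg.2 hq)]
    have h7 : t = 0 := by nlinarith [sq_nonneg t]
    rw [← ht, h7, zero_mul]
  have := key (M.mulVec x)
  rwa [dotProduct_self_eq_zero] at this

lemma rayleigh_bound {n m p : ℕ} (Gx : Matrix (Fin n) (Fin m) ℝ) (Gr : Matrix (Fin p) (Fin m) ℝ)
    (hker : ∀ a : Fin m → ℝ, Gr.mulVec a = 0 → Gx.mulVec a = 0)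
    (lamStar : ℝ)
    (hub : ∀ μ : ℝ, (∃ v : Fin m → ℝ, (Grᵀ * Gr).mulVec v ≠ 0 ∧
        (Gxᵀ * Gx).mulVec v = μ • (Grᵀ * Gr).mulVec v) → μ ≤ lamStar)
    (vStar : Fin m → ℝ) (hv1 : (Grᵀ * Gr).mulVec vStar ≠ 0) :
    0 ≤ lamStar ∧ ∀ a : Fin m → ℝ,
      ∑ i, (Gx.mulVec a i) ^ 2 ≤ lamStar * ∑ i, (Gr.mulVec a i) ^ 2 := by
  classical
  set A := Gxᵀ * Gx with hA
  set B := Grᵀ * Gr with hB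
  set qA : (Fin m → ℝ) → ℝ := fun a => ∑ i, (Gx.mulVec a i) ^ 2 with hqA
  set qB : (Fin m → ℝ) → ℝ := fun a => ∑ i, (Gr.mulVec a i) ^ 2 with hqB
  -- kernel facts
  have kerGr : ∀ k : Fin m → ℝ, B.mulVec k = 0 → Gr.mulVec k = 0 := by
    intro k hk
    have h1 : qB k = 0 := by rw [hqB]; simp only; rw [sq_sum_eq, hk, dotProduct_zero]
    exact (sum_sq_eq_zero_iff _).1 h1
  have kerGx : ∀ k : Fin m → ℝ, B.mulVec k = 0 → Gx.mulVec k = 0 :=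
    fun k hk => hker k (kerGr k hk)
  -- the kernel submodule and a complement
  set K : Submodule ℝ (Fin m → ℝ) := LinearMap.ker B.mulVecLin with hK
  obtain ⟨W, hW⟩ := Submodule.exists_isCompl K
  have memK : ∀ x : Fin m → ℝ, x ∈ K ↔ B.mulVec x = 0 := by
    intro x; simp [hK, LinearMap.mem_ker, Matrix.mulVecLin_apply]
  -- W is nontrivial
  have hKne : K ≠ ⊤ := by
    intro h
    exact hv1 ((memK vStar).1 (h ▸ Submodule.mem_top))
  have hWne : W ≠ ⊥ := by
    intro h
    rw [h] at hW
    exact hKne (by simpa using hW.sup_eq_top)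
  -- the compact set
  set S : Set (Fin m → ℝ) := Metric.sphere 0 1 ∩ (W : Set (Fin m → ℝ)) with hS
  have hSne : S.Nonempty := by
    obtain ⟨w, hwW, hw0⟩ := Submodule.ne_bot_iff W |>.1 hWne
    refine ⟨‖w‖⁻¹ • w, ?_, W.smul_mem _ hwW⟩
    have : ‖w‖ ≠ 0 := norm_ne_zero_iff.2 hw0
    simp [norm_smul, abs_of_nonneg (inv_nonneg.2 (norm_nonneg w)), inv_mul_cancel₀ this]
  have hScomp : IsCompact S := by
    apply (isCompact_closedBall (0 : Fin m → ℝ) 1).of_isClosed_subset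
    · exact Metric.isClosed_sphere.inter (Submodule.closed_of_finiteDimensional W)
    · exact fun x hx => Metric.sphere_subset_closedBall hx.1
  -- qB positive on S
  have hqBpos : ∀ x ∈ S, 0 < qB x := by
    intro x hx
    have hx0 : x ≠ 0 := by
      intro h; rw [h] at hx; simpa using hx.1
    have hBx : B.mulVec x ≠ 0 := by
      intro h
      have : x ∈ K ⊓ W := ⟨(memK x).2 h, hx.2⟩
      rw [hW.inf_eq_bot] at this
      exact hx0 this
    have h0 : qB x ≠ 0 := by
      intro h
      have hGr : Gr.mulVec x = 0 := (sum_sq_eq_zero_iff _).1 h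
      exact hBx (by rw [hB, ← Matrix.mulVec_mulVec, hGr, Matrix.mulVec_zero])
    exact lt_of_le_of_ne (Finset.sum_nonneg fun i _ => sq_nonneg _) (Ne.symm h0)
  -- maximize the Rayleigh quotient on S
  set R : (Fin m → ℝ) → ℝ := fun a => qA a / qB a with hR
  have hRcont : ContinuousOn R S := by
    apply ContinuousOn.div (cont_sumsq Gx).continuousOn (cont_sumsq Gr).continuousOn
    exact fun x hx => ne_of_gt (hqBpos x hx)
  obtain ⟨x₀, hx₀S, hx₀max⟩ := hScomp.exists_isMaxOn hSne hRcont
  set μ : ℝ := R x₀ with hμ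
  have hqBx₀ : 0 < qB x₀ := hqBpos x₀ hx₀S
  have hμ0 : 0 ≤ μ := div_nonneg (Finset.sum_nonneg fun i _ => sq_nonneg _) hqBx₀.le
  -- global bound: qA a ≤ μ * qB a
  have hglobal : ∀ a : Fin m → ℝ, qA a ≤ μ * qB a := by
    intro a
    obtain ⟨w, hwW, k, hkK, hwk⟩ : ∃ w ∈ W, ∃ k ∈ K, w + k = a := by
      have : a ∈ W ⊔ K := by rw [sup_comm, hW.sup_eq_top]; trivial
      exact Submodule.mem_sup.1 this
    have hGrk : Gr.mulVec k = 0 := kerGr k ((memK k).1 hkK)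
    have hGxk : Gx.mulVec k = 0 := kerGx k ((memK k).1 hkK)
    have hqAa : qA a = qA w := by
      have : Gx.mulVec a = Gx.mulVec w := by
        rw [← hwk, Matrix.mulVec_add, hGxk, add_zero]
      simp only [hqA, this]
    have hqBa : qB a = qB w := by
      have : Gr.mulVec a = Gr.mulVec w := by
        rw [← hwk, Matrix.mulVec_add, hGrk, add_zero]
      simp only [hqB, this]
    rw [hqAa, hqBa]
    by_cases hw0 : w = 0
    · simp [hw0, hqA, hqB, Matrix.mulVec_zero]
    · have hnw : ‖w‖ ≠ 0 := norm_ne_zero_iff.2 hw0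
      set u : Fin m → ℝ := ‖w‖⁻¹ • w with hu
      have huS : u ∈ S := by
        constructor
        · simp [hu, norm_smul, abs_of_nonneg (inv_nonneg.2 (norm_nonneg w)),
            inv_mul_cancel₀ hnw]
        · exact W.smul_mem _ hwW
      have hRu : R u ≤ μ := hx₀max huS
      have hqBu : 0 < qB u := hqBpos u huS
      have hqAu : qA u ≤ μ * qB u := by
        rw [hR] at hRu
        simp only at hRu
        calc qA u = (qA u / qB u) * qB u := by field_simp
        _ ≤ μ * qB u := by
            apply mul_le_mul_of_nonneg_right hRu hqBu.le
      have hwu : w = ‖w‖ • u := by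
        rw [hu, smul_smul, mul_inv_cancel₀ hnw, one_smul]
      have e1 : qA w = ‖w‖ ^ 2 * qA u := by
        conv_lhs => rw [hwu]
        exact sumsq_smul Gx _ u
      have e2 : qB w = ‖w‖ ^ 2 * qB u := by
        conv_lhs => rw [hwu]
        exact sumsq_smul Gr _ u
      rw [e1, e2]
      calc ‖w‖ ^ 2 * qA u ≤ ‖w‖ ^ 2 * (μ * qB u) :=
            mul_le_mul_of_nonneg_left hqAu (sq_nonneg _)
        _ = μ * (‖w‖ ^ 2 * qB u) := by ring
  -- μ is a generalized eigenvalue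
  set M : Matrix (Fin m) (Fin m) ℝ := A - μ • B with hM
  have hMsymm : Mᵀ = M := by
    rw [hM, Matrix.transpose_sub, Matrix.transpose_smul, hA, hB,
      Matrix.transpose_mul, Matrix.transpose_transpose,
      Matrix.transpose_mul, Matrix.transpose_transpose]
  have hMdot : ∀ a : Fin m → ℝ, a ⬝ᵥ M.mulVec a = qA a - μ * qB a := by
    intro a
    rw [hM, Matrix.sub_mulVec, dotProduct_sub, Matrix.smul_mulVec,
      dotProduct_smul, smul_eq_mul, hqA, hqB]
    simp only [sq_sum_eq]
    rfl
  have hle : ∀ a : Fin m → ℝ, a ⬝ᵥ M.mulVec a ≤ 0 := by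
    intro a; rw [hMdot]; linarith [hglobal a]
  have hx₀eq : x₀ ⬝ᵥ M.mulVec x₀ = 0 := by
    rw [hMdot, hμ, hR]
    simp only
    field_simp
    ring
  have hMx₀ : M.mulVec x₀ = 0 := by
    apply quad_max_kernel M hMsymm (dot_symm M hMsymm) hle x₀ hx₀eq
  have hBx₀ : B.mulVec x₀ ≠ 0 := by
    intro h
    have hGr : Gr.mulVec x₀ = 0 := kerGr x₀ h
    have : qB x₀ = 0 := by simp [hqB, hGr]
    exact hqBx₀.ne' this
  have heig : A.mulVec x₀ = μ • B.mulVec x₀ := by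
    have := hMx₀
    rw [hM, Matrix.sub_mulVec, Matrix.smul_mulVec, sub_eq_zero] at this
    exact this
  have hμle : μ ≤ lamStar := hub μ ⟨x₀, hBx₀, heig⟩
  refine ⟨le_trans hμ0 hμle, fun a => ?_⟩
  calc qA a ≤ μ * qB a := hglobal a
    _ ≤ lamStar * qB a :=
        mul_le_mul_of_nonneg_right hμle (Finset.sum_nonneg fun i _ => sq_nonneg _)

theorem optimal_bias_injection_attack
    {n m p : ℕ}
    (Gx : Matrix (Fin n) (Fin m) ℝ) (Gr : Matrix (Fin p) (Fin m) ℝ)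
    (hker : ∀ a : Fin m → ℝ, Gr.mulVec a = 0 → Gx.mulVec a = 0)
    (δ : ℝ) (hδ : 0 < δ)
    (lamStar : ℝ) (vStar : Fin m → ℝ)
    (hgreatest : IsGreatest
      {μ : ℝ | ∃ v : Fin m → ℝ, (Grᵀ * Gr).mulVec v ≠ 0 ∧
        (Gxᵀ * Gx).mulVec v = μ • (Grᵀ * Gr).mulVec v} lamStar)
    (hvStar : (Grᵀ * Gr).mulVec vStar ≠ 0 ∧
      (Gxᵀ * Gx).mulVec vStar = lamStar • (Grᵀ * Gr).mulVec vStar)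
    (hunit : ∑ i, (vStar i) ^ 2 = 1)
    (hGrv : Gr.mulVec vStar ≠ 0)
    (aStar : Fin m → ℝ)
    (haStar : aStar = (δ / Real.sqrt (∑ i, (Gr.mulVec vStar i) ^ 2)) • vStar) :
    (∑ i, (Gr.mulVec aStar i) ^ 2 = δ ^ 2) ∧
    (∑ i, (Gx.mulVec aStar i) ^ 2 = lamStar * δ ^ 2) ∧
    (∀ a : Fin m → ℝ, (∑ i, (Gr.mulVec a i) ^ 2) ≤ δ ^ 2 →
      (∑ i, (Gx.mulVec a i) ^ 2) ≤ lamStar * δ ^ 2) := by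
  have hSpos : 0 < ∑ i, (Gr.mulVec vStar i) ^ 2 := by
    rcases lt_or_eq_of_le (Finset.sum_nonneg fun i _ => sq_nonneg ((Gr.mulVec vStar) i)) with h | h
    · exact h
    · exact absurd ((sum_sq_eq_zero_iff _).1 h.symm) hGrv
  set Ssum := ∑ i, (Gr.mulVec vStar i) ^ 2 with hSsum
  set c := δ / Real.sqrt Ssum with hcdef
  have hsqrt : Real.sqrt Ssum ^ 2 = Ssum := Real.sq_sqrt hSpos.le
  have hsqrtpos : 0 < Real.sqrt Ssum := Real.sqrt_pos.2 hSpos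
  have hc2 : c ^ 2 = δ ^ 2 / Ssum := by
    rw [hcdef, div_pow, hsqrt]
  -- part 1
  have part1 : ∑ i, (Gr.mulVec aStar i) ^ 2 = δ ^ 2 := by
    rw [haStar, sumsq_smul, hc2]
    field_simp
    exact hSsum.symm
  -- part 2
  have hT : ∑ i, (Gx.mulVec vStar i) ^ 2 = lamStar * Ssum := by
    rw [sq_sum_eq, hvStar.2, dotProduct_smul, smul_eq_mul, ← sq_sum_eq]
  have part2 : ∑ i, (Gx.mulVec aStar i) ^ 2 = lamStar * δ ^ 2 := by
    rw [haStar, sumsq_smul, hT, hc2]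
    field_simp
  -- part 3
  obtain ⟨hlam0, hbound⟩ := rayleigh_bound Gx Gr hker lamStar
    (fun μ hμ => hgreatest.2 hμ) vStar hvStar.1
  refine ⟨part1, part2, fun a ha => ?_⟩
  calc ∑ i, (Gx.mulVec a i) ^ 2 ≤ lamStar * ∑ i, (Gr.mulVec a i) ^ 2 := hbound a
    _ ≤ lamStar * δ ^ 2 := mul_le_mul_of_nonneg_left ha hlam0
end

section
/- Let G_x ∈ ℝ^{n×m}, G_r ∈ ℝ^{p×m}, δ > 0, and for each i ∈ {1,…,n} let λ*_i be the largest generalized eigenvalue of the pencil (G_xᵀ e_i e_iᵀ G_x, G_rᵀ G_r), where e_i is the i-th standard basis vector; assume ker(G_r) ⊆ ker(e_iᵀG_x) for all i. Let λ* = max_i λ*_i. Then max{‖G_x a‖_∞ : ‖G_r a‖₂ ≤ δ} = √(λ*) · δ. -/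
open Matrix BigOperators

section Helpers
open RealInnerProductSpace

lemma range_lemma' {m p : ℕ} (Gr : Matrix (Fin p) (Fin m) ℝ) (w : Fin m → ℝ)
    (h : ∀ a : Fin m → ℝ, Gr.mulVec a = 0 → w ⬝ᵥ a = 0) :
    ∃ u : Fin m → ℝ, (Grᵀ * Gr).mulVec u = w := by
  classical
  let T : EuclideanSpace ℝ (Fin m) →ₗ[ℝ] EuclideanSpace ℝ (Fin m) :=
    { toFun := fun x => WithLp.toLp 2 ((Grᵀ * Gr).mulVec x)
      map_add' := fun x y => by simp [Matrix.mulVec_add]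
      map_smul' := fun c x => by simp [Matrix.mulVec_smul] }
  let S : Submodule ℝ (EuclideanSpace ℝ (Fin m)) := LinearMap.range T
  let w' : EuclideanSpace ℝ (Fin m) := WithLp.toLp 2 w
  have hB : ∀ v a : Fin m → ℝ, (Grᵀ * Gr).mulVec v ⬝ᵥ a = (Gr.mulVec v) ⬝ᵥ (Gr.mulVec a) := by
    intro v a
    rw [← Matrix.mulVec_mulVec, dotProduct_comm, Matrix.dotProduct_mulVec,
      Matrix.vecMul_transpose, dotProduct_comm]
  have hw : w' ∈ Sᗮᗮ := by
    refine (Submodule.mem_orthogonal Sᗮ w').mpr ?_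
    intro z hz
    have h1 : ⟪T z, z⟫ = 0 := (Submodule.mem_orthogonal S z).mp hz (T z) ⟨z, rfl⟩
    have h2 : Gr.mulVec z = 0 := by
      have h0 : (Gr.mulVec z) ⬝ᵥ (Gr.mulVec z) = 0 := by
        rw [← hB]
        simpa [PiLp.inner_apply, dotProduct, T, mul_comm] using h1
      have hns : ∑ j, (Gr.mulVec z j)^2 = 0 := by simpa [dotProduct, sq] using h0
      funext j
      have := (Finset.sum_eq_zero_iff_of_nonneg (fun j _ => sq_nonneg (Gr.mulVec z j))).mp hns j (Finset.mem_univ j)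
      exact pow_eq_zero_iff (by norm_num) |>.mp this
    have h3 : w ⬝ᵥ z = 0 := h z h2
    show ⟪z, w'⟫ = 0
    rw [PiLp.inner_apply]
    simpa [dotProduct, mul_comm, w'] using h3
  rw [Submodule.orthogonal_orthogonal] at hw
  obtain ⟨u, hu⟩ := hw
  exact ⟨u, congrArg WithLp.ofLp hu⟩

lemma quad_lemma {m p : ℕ} (Gr : Matrix (Fin p) (Fin m) ℝ) (v a : Fin m → ℝ) :
    (Grᵀ * Gr).mulVec v ⬝ᵥ a = (Gr.mulVec v) ⬝ᵥ (Gr.mulVec a) := by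
  rw [← Matrix.mulVec_mulVec, dotProduct_comm, Matrix.dotProduct_mulVec,
    Matrix.vecMul_transpose, dotProduct_comm]

lemma triple_lemma {n m : ℕ} (Gx : Matrix (Fin n) (Fin m) ℝ) (v : Fin m → ℝ) (i : Fin n) :
    (Gxᵀ * Matrix.single i i (1:ℝ) * Gx).mulVec v
      = (Gx.mulVec v i) • fun j => Gx i j := by
  funext j
  simp [Matrix.mulVec, Matrix.mul_apply, Matrix.single, dotProduct, Finset.sum_mul,
    Finset.mul_sum, ite_and]
  exact Finset.sum_congr rfl fun x _ => by ring

lemma sq_sum_pos {p : ℕ} (y : Fin p → ℝ) (hy : y ≠ 0) : 0 < ∑ j, (y j)^2 := by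
  rcases Function.ne_iff.mp hy with ⟨j, hj⟩
  refine Finset.sum_pos' (fun k _ => sq_nonneg _) ⟨j, Finset.mem_univ j, ?_⟩
  exact pow_pos (abs_pos.mpr hj) 2 |>.trans_le (by rw [sq_abs])

lemma sq_sum_zero {p : ℕ} (y : Fin p → ℝ) (hy : ∑ j, (y j)^2 = 0) : y = 0 := by
  funext j
  have := (Finset.sum_eq_zero_iff_of_nonneg (fun k _ => sq_nonneg (y k))).mp hy j (Finset.mem_univ j)
  exact pow_eq_zero_iff (by norm_num) |>.mp this

lemma key_lemma {n m p : ℕ}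
    (Gx : Matrix (Fin n) (Fin m) ℝ) (Gr : Matrix (Fin p) (Fin m) ℝ)
    (hker : ∀ a : Fin m → ℝ, Gr.mulVec a = 0 → Gx.mulVec a = 0)
    (i : Fin n) (μ : ℝ)
    (hl : IsGreatest
      {μ : ℝ | ∃ v : Fin m → ℝ, (Grᵀ * Gr).mulVec v ≠ 0 ∧
        (Gxᵀ * Matrix.single i i (1 : ℝ) * Gx).mulVec v
          = μ • (Grᵀ * Gr).mulVec v} μ) :
    0 ≤ μ ∧ (∀ a : Fin m → ℝ, (Gx.mulVec a i)^2 ≤ μ * ∑ j, (Gr.mulVec a j)^2) ∧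
    ∃ v : Fin m → ℝ, (∑ j, (Gr.mulVec v j)^2) = 1 ∧ (Gx.mulVec v i)^2 = μ := by
  classical
  obtain ⟨⟨v, hBv, heig⟩, hub⟩ := hl
  set w : Fin m → ℝ := fun j => Gx i j with hw
  have hwa : ∀ a : Fin m → ℝ, w ⬝ᵥ a = Gx.mulVec a i := fun a => rfl
  rw [triple_lemma] at heig
  -- dot eigen equation with arbitrary a
  have hdot : ∀ a : Fin m → ℝ,
      (Gx.mulVec v i) * (Gx.mulVec a i) = μ * ((Gr.mulVec v) ⬝ᵥ (Gr.mulVec a)) := by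
    intro a
    have := congrArg (fun x => x ⬝ᵥ a) heig
    simp only [smul_dotProduct, quad_lemma, smul_eq_mul] at this
    exact this
  set c : ℝ := Gx.mulVec v i with hc
  have hGrv : Gr.mulVec v ≠ 0 := by
    intro h0
    apply hBv
    rw [← Matrix.mulVec_mulVec, h0, Matrix.mulVec_zero]
  have hQv : 0 < ∑ j, (Gr.mulVec v j)^2 := sq_sum_pos _ hGrv
  have hQv' : (Gr.mulVec v) ⬝ᵥ (Gr.mulVec v) = ∑ j, (Gr.mulVec v j)^2 := by
    simp [dotProduct, sq]
  have hcsq : c^2 = μ * ∑ j, (Gr.mulVec v j)^2 := by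
    rw [sq, ← hQv']; exact hdot v
  have hμ0 : 0 ≤ μ := by
    by_contra hlt
    push_neg at hlt
    nlinarith [sq_nonneg c]
  refine ⟨hμ0, ?_, ?_⟩
  · -- the bound
    intro a
    have hCS : ((Gr.mulVec v) ⬝ᵥ (Gr.mulVec a))^2
        ≤ (∑ j, (Gr.mulVec v j)^2) * ∑ j, (Gr.mulVec a j)^2 := by
      simpa [dotProduct] using
        Finset.sum_mul_sq_le_sq_mul_sq Finset.univ (Gr.mulVec v) (Gr.mulVec a)
    by_cases hcz : c = 0
    · -- degenerate case: μ = 0 and w = 0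
      have hμz : μ = 0 := by
        have := hcsq; rw [hcz] at this; nlinarith
      have hwzero : w = 0 := by
        by_contra hwne
        obtain ⟨u, hu⟩ := range_lemma' Gr w (by
          intro a ha
          have := hker a ha
          rw [hwa]
          exact congrFun this i)
        have hBu : (Grᵀ * Gr).mulVec u ≠ 0 := by rw [hu]; exact hwne
        have hmem : (w ⬝ᵥ u) ∈ {μ : ℝ | ∃ v : Fin m → ℝ, (Grᵀ * Gr).mulVec v ≠ 0 ∧
            (Gxᵀ * Matrix.single i i (1 : ℝ) * Gx).mulVec v
              = μ • (Grᵀ * Gr).mulVec v} := by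
          refine ⟨u, hBu, ?_⟩
          rw [triple_lemma, hu, hwa]
        have hle : w ⬝ᵥ u ≤ μ := hub hmem
        have hqu : w ⬝ᵥ u = (Gr.mulVec u) ⬝ᵥ (Gr.mulVec u) := by
          rw [← hu, quad_lemma]
        have hqu0 : (Gr.mulVec u) ⬝ᵥ (Gr.mulVec u) = ∑ j, (Gr.mulVec u j)^2 := by
          simp [dotProduct, sq]
        have hge : 0 ≤ w ⬝ᵥ u := by
          rw [hqu, hqu0]; positivity
        have heq0 : ∑ j, (Gr.mulVec u j)^2 = 0 := by
          rw [← hqu0, ← hqu]; linarith [hle, hge, hμz ▸ hle]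
        have : Gr.mulVec u = 0 := sq_sum_zero _ heq0
        apply hwne
        rw [← hu, ← Matrix.mulVec_mulVec, this, Matrix.mulVec_zero]
      have : Gx.mulVec a i = 0 := by
        rw [← hwa, hwzero, zero_dotProduct]
      rw [this, hμz]
      have : 0 ≤ ∑ j, (Gr.mulVec a j)^2 := by positivity
      nlinarith
    · -- generic case
      have hμpos : 0 < μ := by
        rcases hμ0.lt_or_eq with h | h
        · exact h
        · exfalso; apply hcz; nlinarith [hcsq]
      have hda := hdot a
      -- (Gx a i) = (μ/c) * Q v a
      have : Gx.mulVec a i = (μ / c) * ((Gr.mulVec v) ⬝ᵥ (Gr.mulVec a)) := by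
        field_simp
        linarith [hda]
      rw [this]
      have h1 : ((μ / c) * ((Gr.mulVec v) ⬝ᵥ (Gr.mulVec a)))^2
          = (μ/c)^2 * ((Gr.mulVec v) ⬝ᵥ (Gr.mulVec a))^2 := by ring
      rw [h1]
      have h2 : (μ/c)^2 * ((∑ j, (Gr.mulVec v j)^2) * ∑ j, (Gr.mulVec a j)^2)
          = μ * ∑ j, (Gr.mulVec a j)^2 := by
        have : (μ/c)^2 = μ^2 / c^2 := by ring
        rw [this, hcsq]
        field_simp
      calc (μ/c)^2 * ((Gr.mulVec v) ⬝ᵥ (Gr.mulVec a))^2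
          ≤ (μ/c)^2 * ((∑ j, (Gr.mulVec v j)^2) * ∑ j, (Gr.mulVec a j)^2) := by
            apply mul_le_mul_of_nonneg_left hCS (by positivity)
        _ = μ * ∑ j, (Gr.mulVec a j)^2 := h2
  · -- attainment
    refine ⟨(Real.sqrt (∑ j, (Gr.mulVec v j)^2))⁻¹ • v, ?_, ?_⟩
    · have hs : 0 < Real.sqrt (∑ j, (Gr.mulVec v j)^2) := Real.sqrt_pos.mpr hQv
      simp only [Matrix.mulVec_smul, Pi.smul_apply, smul_eq_mul]
      rw [Finset.sum_congr rfl (fun j _ => mul_pow _ _ 2 :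
        ∀ j ∈ Finset.univ, ((Real.sqrt (∑ j, (Gr.mulVec v j)^2))⁻¹ * Gr.mulVec v j)^2
          = ((Real.sqrt (∑ j, (Gr.mulVec v j)^2))⁻¹)^2 * (Gr.mulVec v j)^2)]
      rw [← Finset.mul_sum, inv_pow, Real.sq_sqrt hQv.le, inv_mul_cancel₀ (ne_of_gt hQv)]
    · simp only [Matrix.mulVec_smul, Pi.smul_apply, smul_eq_mul]
      rw [mul_pow, inv_pow, Real.sq_sqrt hQv.le, ← hc, hcsq]
      field_simp

end Helpers

theorem optimal_bias_injection_attack_inf_norm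
    {n m p : ℕ}
    (Gx : Matrix (Fin n) (Fin m) ℝ) (Gr : Matrix (Fin p) (Fin m) ℝ)
    (δ : ℝ) (hδ : 0 < δ)
    (hker : ∀ a : Fin m → ℝ, Gr.mulVec a = 0 → Gx.mulVec a = 0)
    (lami : Fin n → ℝ)
    (hlami : ∀ i : Fin n, IsGreatest
      {μ : ℝ | ∃ v : Fin m → ℝ, (Grᵀ * Gr).mulVec v ≠ 0 ∧
        (Gxᵀ * Matrix.single i i (1 : ℝ) * Gx).mulVec v
          = μ • (Grᵀ * Gr).mulVec v} (lami i))
    (lamStar : ℝ)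
    (hlamStar : IsGreatest (Set.range lami) lamStar) :
    IsGreatest
      {t : ℝ | ∃ a : Fin m → ℝ, (∑ i, (Gr.mulVec a i) ^ 2) ≤ δ ^ 2 ∧
        t = ⨆ i : Fin n, |Gx.mulVec a i|}
      (Real.sqrt lamStar * δ) := by
  classical
  obtain ⟨⟨i₀, hi₀⟩, hubStar⟩ := hlamStar
  have hne : Nonempty (Fin n) := ⟨i₀⟩
  have hkey := fun i => key_lemma Gx Gr hker i (lami i) (hlami i)
  have hlamle : ∀ i, lami i ≤ lamStar := fun i => hubStar ⟨i, rfl⟩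
  have hStar0 : 0 ≤ lamStar := le_trans (hkey i₀).1 (hlamle i₀)
  -- pointwise bound for feasible a
  have hptbound : ∀ (a : Fin m → ℝ), (∑ j, (Gr.mulVec a j) ^ 2) ≤ δ ^ 2 →
      ∀ i, |Gx.mulVec a i| ≤ Real.sqrt lamStar * δ := by
    intro a ha i
    have h1 : (Gx.mulVec a i)^2 ≤ lamStar * δ^2 := by
      calc (Gx.mulVec a i)^2 ≤ lami i * ∑ j, (Gr.mulVec a j)^2 := (hkey i).2.1 a
        _ ≤ lamStar * ∑ j, (Gr.mulVec a j)^2 := by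
            apply mul_le_mul_of_nonneg_right (hlamle i) (by positivity)
        _ ≤ lamStar * δ^2 := mul_le_mul_of_nonneg_left ha hStar0
    calc |Gx.mulVec a i| = Real.sqrt ((Gx.mulVec a i)^2) := (Real.sqrt_sq_eq_abs _).symm
      _ ≤ Real.sqrt (lamStar * δ^2) := Real.sqrt_le_sqrt h1
      _ = Real.sqrt lamStar * δ := by
          rw [Real.sqrt_mul hStar0, Real.sqrt_sq hδ.le]
  constructor
  · -- membership: achieved by δ • v where v is normalized eigvec for i₀
    obtain ⟨v, hvnorm, hvval⟩ := (hkey i₀).2.2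
    refine ⟨δ • v, ?_, ?_⟩
    · have : ∀ j, (Gr.mulVec (δ • v) j)^2 = δ^2 * (Gr.mulVec v j)^2 := by
        intro j
        rw [Matrix.mulVec_smul]
        simp [mul_pow]
      rw [Finset.sum_congr rfl (fun j _ => this j), ← Finset.mul_sum, hvnorm, mul_one]
    · have hfeas : (∑ j, (Gr.mulVec (δ • v) j) ^ 2) ≤ δ^2 := by
        have : ∀ j, (Gr.mulVec (δ • v) j)^2 = δ^2 * (Gr.mulVec v j)^2 := by
          intro j; rw [Matrix.mulVec_smul]; simp [mul_pow]
        rw [Finset.sum_congr rfl (fun j _ => this j), ← Finset.mul_sum, hvnorm, mul_one]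
      have hval : |Gx.mulVec (δ • v) i₀| = Real.sqrt lamStar * δ := by
        have h2 : (Gx.mulVec (δ • v) i₀)^2 = lamStar * δ^2 := by
          rw [Matrix.mulVec_smul]
          simp only [Pi.smul_apply, smul_eq_mul]
          rw [mul_pow, hvval, hi₀]
          ring
        calc |Gx.mulVec (δ • v) i₀| = Real.sqrt ((Gx.mulVec (δ • v) i₀)^2) :=
            (Real.sqrt_sq_eq_abs _).symm
          _ = Real.sqrt (lamStar * δ^2) := by rw [h2]
          _ = Real.sqrt lamStar * δ := by rw [Real.sqrt_mul hStar0, Real.sqrt_sq hδ.le]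
      refine le_antisymm ?_ ?_
      · exact le_ciSup_of_le (Set.Finite.bddAbove (Set.finite_range _)) i₀ hval.ge
      · exact ciSup_le fun i => hptbound _ hfeas i
  · -- upper bound
    rintro t ⟨a, ha, rfl⟩
    exact ciSup_le fun i => hptbound a ha i
end

section
/- Let Ā ∈ ℝ^{N×N}, C̄ ∈ ℝ^{p×N}, ψ₀ ∈ ℝ^N, and suppose there exist γ ≤ δ² and a symmetric positive definite P ∈ ℝ^{N×N} such that ψ₀ᵀ P ψ₀ ≤ 1, the block matrix [[P, C̄ᵀ],[C̄, γI]] is positive semidefinite, and ĀᵀPĀ − P is negative semidefinite. Then the autonomous system ψ_{k+1} = Ā ψ_k, r_k = C̄ ψ_k with ψ_0 = ψ₀ satisfies ‖r_k‖₂² ≤ δ² for all k ≥ 0. -/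
open Matrix BigOperators

private lemma block_quad_aux {N p : ℕ} (Cbar : Matrix (Fin p) (Fin N) ℝ) (γ : ℝ)
    (P : Matrix (Fin N) (Fin N) ℝ)
    (hblock : (Matrix.fromBlocks P Cbarᵀ Cbar (γ • (1 : Matrix (Fin p) (Fin p) ℝ))).PosSemidef)
    (x : Fin N → ℝ) (t : ℝ) :
    0 ≤ γ * ((Cbar.mulVec x) ⬝ᵥ (Cbar.mulVec x)) * (t * t)
      + (2 * ((Cbar.mulVec x) ⬝ᵥ (Cbar.mulVec x))) * t + x ⬝ᵥ P.mulVec x := by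
  have h := hblock.dotProduct_mulVec_nonneg (Sum.elim x (t • Cbar.mulVec x))
  simp only [star_trivial] at h
  have he : Sum.elim x (t • Cbar.mulVec x) = (x ⊕ᵥ (t • Cbar.mulVec x)) := rfl
  rw [he, fromBlocks_mulVec] at h
  simp only [Sum.elim_comp_inl, Sum.elim_comp_inr] at h
  rw [sumElim_dotProduct_sumElim] at h
  have hc : x ⬝ᵥ Cbarᵀ *ᵥ (Cbar *ᵥ x) = (Cbar *ᵥ x) ⬝ᵥ (Cbar *ᵥ x) := by
    rw [dotProduct_mulVec, vecMul_transpose]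
  simp only [dotProduct_add, mulVec_smul, dotProduct_smul, smul_dotProduct, smul_eq_mul,
    one_mulVec, smul_mulVec, smul_smul, hc] at h
  ring_nf at h ⊢
  linarith [h]

theorem stealthiness_LMI_output_peak_bound
    {N p : ℕ}
    (Abar : Matrix (Fin N) (Fin N) ℝ) (Cbar : Matrix (Fin p) (Fin N) ℝ)
    (ψ₀ : Fin N → ℝ) (δ γ : ℝ)
    (hγδ : γ ≤ δ ^ 2)
    (P : Matrix (Fin N) (Fin N) ℝ) (hP : P.PosDef)
    (hinit : ψ₀ ⬝ᵥ P.mulVec ψ₀ ≤ 1)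
    (hblock : (Matrix.fromBlocks P Cbarᵀ Cbar (γ • (1 : Matrix (Fin p) (Fin p) ℝ))).PosSemidef)
    (hlyap : (P - Abarᵀ * P * Abar).PosSemidef)
    (ψ : ℕ → Fin N → ℝ)
    (hψ0 : ψ 0 = ψ₀)
    (hstep : ∀ k, ψ (k + 1) = Abar.mulVec (ψ k)) :
    ∀ k, (∑ i, (Cbar.mulVec (ψ k) i) ^ 2) ≤ δ ^ 2 := by
  -- the Lyapunov function stays ≤ 1
  have hv : ∀ k, ψ k ⬝ᵥ P.mulVec (ψ k) ≤ 1 := by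
    intro k
    induction k with
    | zero => rw [hψ0]; exact hinit
    | succ k ih =>
      rw [hstep k]
      have h := hlyap.dotProduct_mulVec_nonneg (ψ k)
      simp only [star_trivial, sub_mulVec, dotProduct_sub] at h
      have hq : ψ k ⬝ᵥ (Abarᵀ * P * Abar) *ᵥ (ψ k)
          = (Abar *ᵥ ψ k) ⬝ᵥ P *ᵥ (Abar *ᵥ ψ k) := by
        rw [mul_assoc Abarᵀ P Abar, ← mulVec_mulVec,
          dotProduct_mulVec, vecMul_transpose, ← mulVec_mulVec]
      rw [hq] at h
      linarith
  intro k
  set x := ψ k with hx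
  set s : ℝ := (Cbar.mulVec x) ⬝ᵥ (Cbar.mulVec x) with hs
  have hsum : (∑ i, (Cbar.mulVec x i) ^ 2) = s := by
    simp [hs, dotProduct, pow_two]
  rw [hsum]
  have hs0 : 0 ≤ s := by
    rw [← hsum]
    exact Finset.sum_nonneg fun i _ => sq_nonneg _
  rcases hs0.eq_or_lt with h0 | hspos
  · rw [← h0]; exact sq_nonneg δ
  · -- quadratic in t is nonnegative, so discriminant ≤ 0
    have hq : ∀ t : ℝ, 0 ≤ γ * s * (t * t) + (2 * s) * t + (x ⬝ᵥ P.mulVec x) :=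
      fun t => block_quad_aux Cbar γ P hblock x t
    have hd := discrim_le_zero hq
    rw [discrim] at hd
    have hv0 : 0 ≤ x ⬝ᵥ P.mulVec x := by simpa using hP.posSemidef.dotProduct_mulVec_nonneg x
    have hv1 : x ⬝ᵥ P.mulVec x ≤ 1 := hv k
    have hsv : s ≤ γ * (x ⬝ᵥ P.mulVec x) := by nlinarith [hd, hspos]
    have hγpos : 0 < γ := by
      by_contra h'
      push_neg at h'
      have : γ * (x ⬝ᵥ P.mulVec x) ≤ 0 := mul_nonpos_of_nonpos_of_nonneg h' hv0
      linarith
    have : γ * (x ⬝ᵥ P.mulVec x) ≤ γ * 1 := by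
      exact mul_le_mul_of_nonneg_left hv1 hγpos.le
    linarith
end
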